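/- Fix an even integer k ≥ 4 and a real A > 0. There exists a constant C = C(k, A) such that for every prime q, ∑_{n=1}^∞ n^{−3/2} |V(n/q)| · |W(√q · n²)| ≤ C · q^{−A}. -/

import Mathlib

/-- `γ_□(s) = π^{−3s/2} Γ((s+1)/2) Γ((s+k−1)/2) Γ((s+k)/2)`. -/
noncomputable def gammaBox (k : ℕ) (s : ℂ) : ℂ :=
  (Real.pi : ℂ) ^ (-3 * s / 2) * Complex.Gamma ((s + 1) / 2) *
    Complex.Gamma ((s + k - 1) / 2) * Complex.Gamma ((s + k) / 2)

/-- `V(y)`, the contour integral over `Re(s) = 2` of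
`γ_□(1/2+s)/γ_□(1/2) (1 − q^{−1−2s}) ζ(1+2s) y^{−s} ds/(2πis)`. -/
noncomputable def Vfun (k q : ℕ) (y : ℝ) : ℂ :=
  (1 / (2 * Real.pi)) *
    ∫ t : ℝ,
      (gammaBox k (5 / 2 + t * Complex.I) / gammaBox k (1 / 2)) *
        (1 - (q : ℂ) ^ (-(5 + 2 * t * Complex.I))) *
        riemannZeta (5 + 2 * t * Complex.I) *
        (y : ℂ) ^ (-(2 + t * Complex.I)) / (2 + t * Complex.I)

/-- `γ(s) = (2π)^{−s} Γ(s + (k−1)/2)`. -/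
noncomputable def gammaW (k : ℕ) (s : ℂ) : ℂ :=
  (2 * Real.pi : ℂ) ^ (-s) * Complex.Gamma (s + ((k : ℂ) - 1) / 2)

/-- `W(y)`, the contour integral over `Re(s) = 2` of `γ(1/2+s)/γ(1/2) y^{−s} ds/(2πis)`. -/
noncomputable def Wfun (k : ℕ) (y : ℝ) : ℂ :=
  (1 / (2 * Real.pi)) *
    ∫ t : ℝ,
      (gammaW k (5 / 2 + t * Complex.I) / gammaW k (1 / 2)) *
        (y : ℂ) ^ (-(2 + t * Complex.I)) / (2 + t * Complex.I)



open MeasureTheory Set Filter Topology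

lemma norm_Gamma_le {s : ℂ} (hs : 0 < s.re) : ‖Complex.Gamma s‖ ≤ Real.Gamma s.re := by
  rw [Complex.Gamma_eq_integral hs, Real.Gamma_eq_integral hs, Complex.GammaIntegral]
  refine (norm_integral_le_integral_norm _).trans_eq ?_
  refine setIntegral_congr_fun measurableSet_Ioi fun x hx => ?_
  rw [norm_mul, Complex.norm_real, Real.norm_eq_abs,
    abs_of_nonneg (Real.exp_pos _).le, Complex.norm_cpow_eq_rpow_re_of_pos hx]
  simp [Complex.sub_re]

lemma norm_Gamma_decay {s : ℂ} (hs : 0 < s.re) :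
    ‖Complex.Gamma s‖ * (1 + s.im ^ 2) ≤
      2 * max (Real.Gamma s.re) (Real.Gamma (s.re + 2)) := by
  have hG : 0 ≤ ‖Complex.Gamma s‖ := norm_nonneg _
  rcases le_or_gt (s.im ^ 2) 1 with h | h
  · have h1 := norm_Gamma_le hs
    have : ‖Complex.Gamma s‖ * (1 + s.im ^ 2) ≤ Real.Gamma s.re * 2 := by nlinarith
    calc ‖Complex.Gamma s‖ * (1 + s.im ^ 2) ≤ Real.Gamma s.re * 2 := this
    _ ≤ 2 * max (Real.Gamma s.re) (Real.Gamma (s.re + 2)) := by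
        rw [mul_comm]; gcongr; exact le_max_left _ _
  · have hs0 : s ≠ 0 := fun h0 => by simp [h0] at hs
    have hs1 : s + 1 ≠ 0 := by
      intro h0
      have : s.re + 1 = 0 := by
        have := congrArg Complex.re h0; simpa using this
      linarith
    have key : Complex.Gamma (s + 2) = (s + 1) * (s * Complex.Gamma s) := by
      have h2 : s + 2 = (s + 1) + 1 := by ring
      rw [h2, Complex.Gamma_add_one _ hs1, Complex.Gamma_add_one _ hs0]
    have hre2 : (s + 2).re = s.re + 2 := by simp
    have hb : ‖Complex.Gamma (s + 2)‖ ≤ Real.Gamma (s.re + 2) := by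
      have := norm_Gamma_le (s := s + 2) (by rw [hre2]; linarith)
      rwa [hre2] at this
    have a1 : |s.im| ≤ ‖s + 1‖ := by
      calc |s.im| = |(s+1).im| := by simp
      _ ≤ ‖s+1‖ := Complex.abs_im_le_norm _
    have a2 : |s.im| ≤ ‖s‖ := by
      exact Complex.abs_im_le_norm _
    have him : |s.im| * |s.im| * ‖Complex.Gamma s‖ ≤ ‖Complex.Gamma (s + 2)‖ := by
      rw [key, norm_mul, norm_mul, mul_assoc]
      exact mul_le_mul a1 (mul_le_mul a2 le_rfl hG (norm_nonneg _))
        (by positivity) (norm_nonneg _)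
    have h2 : s.im ^ 2 * ‖Complex.Gamma s‖ ≤ Real.Gamma (s.re + 2) := by
      calc s.im ^ 2 * ‖Complex.Gamma s‖ = |s.im| * |s.im| * ‖Complex.Gamma s‖ := by
            rw [← sq, sq_abs]
      _ ≤ ‖Complex.Gamma (s+2)‖ := him
      _ ≤ Real.Gamma (s.re + 2) := hb
    have hmax : Real.Gamma (s.re + 2) ≤ max (Real.Gamma s.re) (Real.Gamma (s.re + 2)) :=
      le_max_right _ _
    nlinarith [hG, h, h2, hmax]

lemma summable_aux (p : ℝ) (hp : 1 < p) : Summable (fun n : ℕ => ((n : ℝ) + 1) ^ (-p)) := by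
  have h : Summable (fun n : ℕ => ((n : ℝ)) ^ (-p)) := by
    rw [Real.summable_nat_rpow]; linarith
  have := h.comp_injective (add_right_injective 1)
  refine this.congr fun n => ?_
  simp [add_comm]

lemma norm_zeta_le {s : ℂ} (hs : 2 ≤ s.re) :
    ‖riemannZeta s‖ ≤ ∑' n : ℕ, ((n : ℝ) + 1) ^ (-(2:ℝ)) := by
  rw [zeta_eq_tsum_one_div_nat_add_one_cpow (by linarith : 1 < s.re)]
  have hnorm : ∀ n : ℕ, ‖1 / ((n : ℂ) + 1) ^ s‖ = ((n : ℝ) + 1) ^ (-s.re) := by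
    intro n
    rw [norm_div, norm_one]
    have : ((n : ℂ) + 1) = (((n : ℝ) + 1 : ℝ) : ℂ) := by push_cast; ring
    rw [this, Complex.norm_cpow_eq_rpow_re_of_pos (by positivity)]
    rw [Real.rpow_neg (by positivity), one_div]
  have hsum : Summable (fun n : ℕ => ‖1 / ((n : ℂ) + 1) ^ s‖) := by
    refine (summable_aux s.re (by linarith)).congr fun n => (hnorm n).symm
  refine (norm_tsum_le_tsum_norm hsum).trans ?_
  refine Summable.tsum_le_tsum (fun n => ?_) hsum (summable_aux 2 one_lt_two)
  rw [hnorm n]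
  exact Real.rpow_le_rpow_of_exponent_le (by push_cast; linarith [Nat.cast_nonneg (α := ℝ) n]) (by linarith)

lemma two_pi_pos : (0:ℝ) < 2 * Real.pi := by positivity

lemma gammaW_arg (k : ℕ) (s : ℂ) :
    1 / 2 + s + ((k : ℂ) - 1) / 2 = s + (((k : ℝ) / 2 : ℝ) : ℂ) := by push_cast; ring

lemma gammaW_arg_re (k : ℕ) (s : ℂ) : (1 / 2 + s + ((k : ℂ) - 1) / 2).re = s.re + k / 2 := by
  rw [gammaW_arg]; simp

lemma gammaW_arg_im (k : ℕ) (s : ℂ) : (1 / 2 + s + ((k : ℂ) - 1) / 2).im = s.im := by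
  rw [gammaW_arg]; simp

lemma norm_two_pi_cpow (w : ℂ) : ‖(2 * Real.pi : ℂ) ^ w‖ = (2 * Real.pi) ^ w.re := by
  have h : (2 * Real.pi : ℂ) = (((2 * Real.pi : ℝ)) : ℂ) := by push_cast; ring
  rw [h, Complex.norm_cpow_eq_rpow_re_of_pos two_pi_pos]

lemma norm_ofReal_cpow {y : ℝ} (hy : 0 < y) (w : ℂ) : ‖(y : ℂ) ^ w‖ = y ^ w.re := by
  rw [Complex.norm_cpow_eq_rpow_re_of_pos hy]

lemma gammaW_half_ne (k : ℕ) (hk : 4 ≤ k) : gammaW k (1 / 2) ≠ 0 := by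
  unfold gammaW
  apply mul_ne_zero
  · rw [Ne, Complex.cpow_eq_zero_iff]
    push_neg
    intro h
    exfalso
    have := congrArg Complex.re h
    simp at this
  · apply Complex.Gamma_ne_zero
    intro m h
    have harg : (1:ℂ) / 2 + ((k : ℂ) - 1) / 2 = (((k : ℝ) / 2 : ℝ) : ℂ) := by push_cast; ring
    rw [harg] at h
    have := congrArg Complex.re h
    simp at this
    have hk' : (4:ℝ) ≤ (k:ℝ) := by exact_mod_cast hk
    have hm : (0:ℝ) ≤ (m:ℝ) := Nat.cast_nonneg m
    linarith

noncomputable def Ffun (k : ℕ) (y : ℝ) (s : ℂ) : ℂ :=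
  gammaW k (1 / 2 + s) / gammaW k (1 / 2) * (y : ℂ) ^ (-s) / s

lemma norm_Ffun_eq (k : ℕ) {y : ℝ} (hy : 0 < y) (s : ℂ) :
    ‖Ffun k y s‖ = (2 * Real.pi) ^ (-(1 / 2 + s.re)) *
      ‖Complex.Gamma (1 / 2 + s + ((k : ℂ) - 1) / 2)‖ / ‖gammaW k (1 / 2)‖ *
      y ^ (-s.re) / ‖s‖ := by
  unfold Ffun gammaW
  rw [norm_div, norm_mul, norm_div, norm_mul, norm_two_pi_cpow, norm_ofReal_cpow hy]
  have h1 : (-(1 / 2 + s)).re = -(1 / 2 + s.re) := by simp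
  have h2 : (-s).re = -s.re := by simp
  rw [h1, h2]

/-- The max-Gamma constant. -/

noncomputable def MC (x : ℝ) : ℝ := 2 * max (Real.Gamma x) (Real.Gamma (x + 2))

lemma MC_pos (x : ℝ) (hx : 0 < x) : 0 < MC x := by
  have := Real.Gamma_pos_of_pos hx
  unfold MC
  have : 0 < max (Real.Gamma x) (Real.Gamma (x + 2)) := lt_max_of_lt_left this
  linarith

lemma norm_Gamma_div (s : ℂ) (hs : 0 < s.re) :
    ‖Complex.Gamma s‖ ≤ MC s.re / (1 + s.im ^ 2) := by
  rw [le_div_iff₀ (by positivity)]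
  exact norm_Gamma_decay hs

lemma norm_Ffun_le_vertical (k : ℕ) (hk : 4 ≤ k) {y σ : ℝ} (hy : 0 < y) (hσ : 0 < σ) (t : ℝ) :
    ‖Ffun k y (σ + t * Complex.I)‖ ≤
      ((2 * Real.pi) ^ (-(1 / 2 + σ)) * MC (σ + k / 2) / ‖gammaW k (1 / 2)‖ * y ^ (-σ) / σ) *
        (1 + t ^ 2)⁻¹ := by
  have hre : (σ + t * Complex.I).re = σ := by simp
  have him : (σ + t * Complex.I).im = t := by simp
  have hc0 : 0 < ‖gammaW k (1 / 2)‖ := norm_pos_iff.mpr (gammaW_half_ne k hk)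
  have hargre : (1 / 2 + (σ + t * Complex.I) + ((k : ℂ) - 1) / 2).re = σ + k / 2 := by
    rw [gammaW_arg_re, hre]
  have hargim : (1 / 2 + (σ + t * Complex.I) + ((k : ℂ) - 1) / 2).im = t := by
    rw [gammaW_arg_im, him]
  have hG : ‖Complex.Gamma (1 / 2 + (σ + t * Complex.I) + ((k : ℂ) - 1) / 2)‖ ≤
      MC (σ + k / 2) / (1 + t ^ 2) := by
    have := norm_Gamma_div (1 / 2 + (σ + t * Complex.I) + ((k : ℂ) - 1) / 2)
      (by rw [hargre]; positivity)
    rwa [hargre, hargim] at this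
  have hnorm : σ ≤ ‖σ + t * Complex.I‖ := by
    calc σ = |(σ + t * Complex.I).re| := by rw [hre, abs_of_pos hσ]
    _ ≤ ‖σ + t * Complex.I‖ := Complex.abs_re_le_norm _
  rw [norm_Ffun_eq k hy, hre]
  calc (2 * Real.pi) ^ (-(1 / 2 + σ)) *
      ‖Complex.Gamma (1 / 2 + (σ + t * Complex.I) + ((k : ℂ) - 1) / 2)‖ / ‖gammaW k (1 / 2)‖ *
      y ^ (-σ) / ‖σ + t * Complex.I‖
      ≤ (2 * Real.pi) ^ (-(1 / 2 + σ)) * (MC (σ + k / 2) / (1 + t ^ 2)) / ‖gammaW k (1 / 2)‖ *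
        y ^ (-σ) / σ := by
        gcongr <;> first | exact hG | exact hnorm | exact hc0 | exact hσ | positivity | (unfold MC; positivity)
  _ = ((2 * Real.pi) ^ (-(1 / 2 + σ)) * MC (σ + k / 2) / ‖gammaW k (1 / 2)‖ * y ^ (-σ) / σ) *
        (1 + t ^ 2)⁻¹ := by ring

lemma differentiableAt_Ffun (k : ℕ) {y : ℝ} (hy : 0 < y) {s : ℂ} (hs : 0 < s.re) :
    DifferentiableAt ℂ (Ffun k y) s := by
  have h2pi : (2 * Real.pi : ℂ) ≠ 0 := by
    simp only [Ne, mul_eq_zero, not_or]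
    exact ⟨two_ne_zero, Complex.ofReal_ne_zero.mpr Real.pi_ne_zero⟩
  have hyne : (y : ℂ) ≠ 0 := Complex.ofReal_ne_zero.mpr hy.ne'
  have hsne : s ≠ 0 := fun h => by simp [h] at hs
  have d1 : DifferentiableAt ℂ (fun s : ℂ => (2 * Real.pi : ℂ) ^ (-(1 / 2 + s))) s := by
    apply DifferentiableAt.const_cpow
    · exact ((differentiableAt_const _).add differentiableAt_id).neg
    · exact Or.inl h2pi
  have d2 : DifferentiableAt ℂ (fun s : ℂ => Complex.Gamma (1 / 2 + s + ((k : ℂ) - 1) / 2)) s := by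
    have inner : DifferentiableAt ℂ (fun s : ℂ => 1 / 2 + s + ((k : ℂ) - 1) / 2) s :=
      (((differentiableAt_const _).add differentiableAt_id).add (differentiableAt_const _))
    refine (Complex.differentiableAt_Gamma _ fun m => ?_).comp s inner
    intro h
    have := congrArg Complex.re h
    rw [gammaW_arg_re] at this
    simp at this
    have hm : (0:ℝ) ≤ (m:ℝ) := Nat.cast_nonneg m
    have hk2 : (0:ℝ) ≤ (k:ℝ) / 2 := by positivity
    linarith
  have d3 : DifferentiableAt ℂ (fun s : ℂ => (y : ℂ) ^ (-s)) s :=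
    DifferentiableAt.const_cpow differentiableAt_id.neg (Or.inl hyne)
  have : DifferentiableAt ℂ (fun s : ℂ =>
      (2 * Real.pi : ℂ) ^ (-(1 / 2 + s)) * Complex.Gamma (1 / 2 + s + ((k : ℂ) - 1) / 2) /
        gammaW k (1 / 2) * (y : ℂ) ^ (-s) / s) s :=
    (((d1.mul d2).div_const _).mul d3).div differentiableAt_id hsne
  exact this.congr_of_eventuallyEq (by filter_upwards with w; simp [Ffun, gammaW])

lemma continuous_Ffun_vertical (k : ℕ) {y σ : ℝ} (hy : 0 < y) (hσ : 0 < σ) :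
    Continuous fun t : ℝ => Ffun k y ((σ : ℂ) + t * Complex.I) := by
  rw [continuous_iff_continuousAt]
  intro t
  have hc : Continuous fun t : ℝ => (σ : ℂ) + t * Complex.I := by continuity
  have hre : ((σ : ℂ) + t * Complex.I).re = σ := by simp
  exact ContinuousAt.comp (g := Ffun k y) (f := fun t : ℝ => (σ : ℂ) + t * Complex.I)
    ((differentiableAt_Ffun k hy (s := (σ : ℂ) + t * Complex.I)
      (by rw [hre]; exact hσ)).continuousAt) hc.continuousAt

lemma integrable_Ffun_vertical (k : ℕ) (hk : 4 ≤ k) {y σ : ℝ} (hy : 0 < y) (hσ : 0 < σ) :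
    Integrable fun t : ℝ => Ffun k y ((σ : ℂ) + t * Complex.I) := by
  refine Integrable.mono' ((integrable_inv_one_add_sq).const_mul
    ((2 * Real.pi) ^ (-(1 / 2 + σ)) * MC (σ + k / 2) / ‖gammaW k (1 / 2)‖ * y ^ (-σ) / σ))
    (continuous_Ffun_vertical k hy hσ).aestronglyMeasurable ?_
  filter_upwards with t
  exact norm_Ffun_le_vertical k hk hy hσ t

lemma MC_mono {a b : ℝ} (ha : 2 ≤ a) (hab : a ≤ b) : MC a ≤ MC b := by
  unfold MC
  have h1 := Real.Gamma_strictMonoOn_Ici.monotoneOn (a := a) (b := b) ha (le_trans ha hab) hab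
  have h2 := Real.Gamma_strictMonoOn_Ici.monotoneOn (a := a + 2) (b := b + 2)
    (by simp only [mem_Ici]; linarith) (by simp only [mem_Ici]; linarith) (by linarith)
  have := max_le_max h1 h2
  linarith [this]

lemma norm_Ffun_le_horizontal (k : ℕ) (hk : 4 ≤ k) {y σ₁ σ₂ x T : ℝ} (hy : 1 ≤ y)
    (hσ₁ : 0 < σ₁) (h12 : σ₁ ≤ σ₂) (hx1 : σ₁ ≤ x) (hx2 : x ≤ σ₂) (hT : 1 ≤ |T|) :
    ‖Ffun k y ((x : ℂ) + T * Complex.I)‖ ≤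
      (MC (σ₂ + k / 2) / ‖gammaW k (1 / 2)‖ / σ₁) / T ^ 2 := by
  have hy0 : 0 < y := lt_of_lt_of_le one_pos hy
  have hc0 : 0 < ‖gammaW k (1 / 2)‖ := norm_pos_iff.mpr (gammaW_half_ne k hk)
  have hk4 : (4:ℝ) ≤ (k:ℝ) := by exact_mod_cast hk
  have hT2 : (1:ℝ) ≤ T ^ 2 := by
    rw [← sq_abs]; nlinarith
  set s : ℂ := (x : ℂ) + T * Complex.I with hs
  have hre : s.re = x := by simp [hs]
  have him : s.im = T := by simp [hs]
  have hMCpos : 0 < MC (σ₂ + k / 2) := MC_pos _ (by linarith)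
  have hG : ‖Complex.Gamma (1 / 2 + s + ((k : ℂ) - 1) / 2)‖ ≤ MC (σ₂ + k / 2) / T ^ 2 := by
    have h1 : ‖Complex.Gamma (1 / 2 + s + ((k : ℂ) - 1) / 2)‖ ≤
        MC (x + k / 2) / (1 + T ^ 2) := by
      have := norm_Gamma_div (1 / 2 + s + ((k : ℂ) - 1) / 2)
        (by rw [gammaW_arg_re, hre]; linarith)
      rwa [gammaW_arg_re, gammaW_arg_im, hre, him] at this
    refine h1.trans ?_
    have hmono : MC (x + k / 2) ≤ MC (σ₂ + k / 2) := MC_mono (by linarith) (by linarith)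
    have : (0:ℝ) < T ^ 2 := by linarith
    apply div_le_div₀ hMCpos.le hmono this (by linarith)
  have hP : (2 * Real.pi) ^ (-(1 / 2 + x)) ≤ 1 :=
    Real.rpow_le_one_of_one_le_of_nonpos (by nlinarith [Real.pi_gt_three]) (by linarith)
  have hY : y ^ (-x) ≤ 1 := Real.rpow_le_one_of_one_le_of_nonpos hy (by linarith)
  have hN : σ₁ ≤ ‖s‖ := by
    calc σ₁ ≤ x := hx1
    _ = |s.re| := by rw [hre, abs_of_pos (lt_of_lt_of_le hσ₁ hx1)]
    _ ≤ ‖s‖ := Complex.abs_re_le_norm _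
  rw [norm_Ffun_eq k hy0, hre]
  calc (2 * Real.pi) ^ (-(1 / 2 + x)) * ‖Complex.Gamma (1 / 2 + s + ((k : ℂ) - 1) / 2)‖ /
        ‖gammaW k (1 / 2)‖ * y ^ (-x) / ‖s‖
      ≤ 1 * (MC (σ₂ + k / 2) / T ^ 2) / ‖gammaW k (1 / 2)‖ * 1 / σ₁ := by
        gcongr <;> first | exact hG | exact hN | exact hc0 | exact hσ₁ | positivity |
          (apply mul_nonneg; positivity;  positivity)
  _ = (MC (σ₂ + k / 2) / ‖gammaW k (1 / 2)‖ / σ₁) / T ^ 2 := by ring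

lemma Ffun_shift (k : ℕ) (hk : 4 ≤ k) {y : ℝ} (hy : 1 ≤ y) {σ₁ σ₂ : ℝ}
    (hσ₁ : 0 < σ₁) (h12 : σ₁ ≤ σ₂) :
    ∫ t : ℝ, Ffun k y ((σ₁ : ℂ) + t * Complex.I) =
      ∫ t : ℝ, Ffun k y ((σ₂ : ℂ) + t * Complex.I) := by
  have hy0 : 0 < y := lt_of_lt_of_le one_pos hy
  set K := MC (σ₂ + k / 2) / ‖gammaW k (1 / 2)‖ / σ₁ with hK
  set A₁ := ∫ t : ℝ, Ffun k y ((σ₁ : ℂ) + t * Complex.I) with hA₁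
  set A₂ := ∫ t : ℝ, Ffun k y ((σ₂ : ℂ) + t * Complex.I) with hA₂
  -- rectangle identity
  have key : ∀ T : ℝ,
      Complex.I • (∫ t in (-T)..T, Ffun k y ((σ₂ : ℂ) + t * Complex.I)) -
        Complex.I • (∫ t in (-T)..T, Ffun k y ((σ₁ : ℂ) + t * Complex.I)) =
      (∫ x in σ₁..σ₂, Ffun k y ((x : ℂ) + T * Complex.I)) -
        (∫ x in σ₁..σ₂, Ffun k y ((x : ℂ) + (-T : ℝ) * Complex.I)) := by
    intro T
    have hrect := Complex.integral_boundary_rect_eq_zero_of_differentiableOn (Ffun k y)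
      (⟨σ₁, -T⟩ : ℂ) (⟨σ₂, T⟩ : ℂ) ?_
    · have hre1 : (⟨σ₁, -T⟩ : ℂ).re = σ₁ := rfl
      have hre2 : (⟨σ₂, T⟩ : ℂ).re = σ₂ := rfl
      have him1 : (⟨σ₁, -T⟩ : ℂ).im = -T := rfl
      have him2 : (⟨σ₂, T⟩ : ℂ).im = T := rfl
      rw [hre1, hre2, him1, him2] at hrect
      have h1 : (∫ x in σ₁..σ₂, Ffun k y ((x : ℂ) + (-T : ℝ) * Complex.I)) -
          (∫ x in σ₁..σ₂, Ffun k y ((x : ℂ) + (T : ℝ) * Complex.I)) +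
          Complex.I • (∫ t in (-T)..T, Ffun k y ((σ₂ : ℂ) + t * Complex.I)) -
          Complex.I • (∫ t in (-T)..T, Ffun k y ((σ₁ : ℂ) + t * Complex.I)) = 0 := by
        convert hrect using 4 <;> push_cast <;> ring_nf
      linear_combination h1
    · intro s hs
      rw [Complex.mem_reProdIm] at hs
      have hs1 : s.re ∈ Set.uIcc σ₁ σ₂ := hs.1
      rw [Set.uIcc_of_le h12] at hs1
      exact (differentiableAt_Ffun k hy0 (lt_of_lt_of_le hσ₁ hs1.1)).differentiableWithinAt
  -- vertical limits
  have hlim1 : Tendsto (fun T : ℝ => ∫ t in (-T)..T, Ffun k y ((σ₁ : ℂ) + t * Complex.I))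
      atTop (𝓝 A₁) :=
    intervalIntegral_tendsto_integral (integrable_Ffun_vertical k hk hy0 hσ₁)
      tendsto_neg_atTop_atBot tendsto_id
  have hlim2 : Tendsto (fun T : ℝ => ∫ t in (-T)..T, Ffun k y ((σ₂ : ℂ) + t * Complex.I))
      atTop (𝓝 A₂) :=
    intervalIntegral_tendsto_integral (integrable_Ffun_vertical k hk hy0 (lt_of_lt_of_le hσ₁ h12))
      tendsto_neg_atTop_atBot tendsto_id
  -- horizontal tends to zero
  have hhor : Tendsto (fun T : ℝ =>
      (∫ x in σ₁..σ₂, Ffun k y ((x : ℂ) + T * Complex.I)) -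
        (∫ x in σ₁..σ₂, Ffun k y ((x : ℂ) + (-T : ℝ) * Complex.I))) atTop (𝓝 0) := by
    apply squeeze_zero_norm' (a := fun T : ℝ => (2 * (K * |σ₂ - σ₁|)) * (T ^ 2)⁻¹)
    · filter_upwards [eventually_ge_atTop (1 : ℝ)] with T hT
      have hTabs : 1 ≤ |T| := le_trans hT (le_abs_self T)
      have hb1 : ‖∫ x in σ₁..σ₂, Ffun k y ((x : ℂ) + T * Complex.I)‖ ≤ K / T ^ 2 * |σ₂ - σ₁| := by
        apply intervalIntegral.norm_integral_le_of_norm_le_const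
        intro x hx
        rw [Set.uIoc_of_le h12] at hx
        have := norm_Ffun_le_horizontal k hk (T := T) hy hσ₁ h12 hx.1.le hx.2 hTabs
        rw [← hK] at this
        exact this
      have hb2 : ‖∫ x in σ₁..σ₂, Ffun k y ((x : ℂ) + (-T : ℝ) * Complex.I)‖ ≤
          K / T ^ 2 * |σ₂ - σ₁| := by
        apply intervalIntegral.norm_integral_le_of_norm_le_const
        intro x hx
        rw [Set.uIoc_of_le h12] at hx
        have := norm_Ffun_le_horizontal k hk (T := -T) hy hσ₁ h12 hx.1.le hx.2
          (by rwa [abs_neg])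
        rw [show ((-T : ℝ)) ^ 2 = T ^ 2 by ring, ← hK] at this
        exact this
      calc ‖_ - _‖ ≤ K / T ^ 2 * |σ₂ - σ₁| + K / T ^ 2 * |σ₂ - σ₁| :=
            (norm_sub_le _ _).trans (add_le_add hb1 hb2)
      _ = 2 * (K * |σ₂ - σ₁|) * (T ^ 2)⁻¹ := by ring
    · have : Tendsto (fun T : ℝ => (T ^ 2)⁻¹) atTop (𝓝 0) :=
        (tendsto_pow_atTop two_ne_zero).inv_tendsto_atTop
      simpa only [mul_zero] using this.const_mul (2 * (K * |σ₂ - σ₁|))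
  -- combine
  have hcomb : Tendsto (fun T : ℝ =>
      Complex.I • (∫ t in (-T)..T, Ffun k y ((σ₂ : ℂ) + t * Complex.I)) -
        Complex.I • (∫ t in (-T)..T, Ffun k y ((σ₁ : ℂ) + t * Complex.I))) atTop
      (𝓝 (Complex.I • A₂ - Complex.I • A₁)) :=
    (hlim2.const_smul Complex.I).sub (hlim1.const_smul Complex.I)
  have hcomb0 : Tendsto (fun T : ℝ =>
      Complex.I • (∫ t in (-T)..T, Ffun k y ((σ₂ : ℂ) + t * Complex.I)) -
        Complex.I • (∫ t in (-T)..T, Ffun k y ((σ₁ : ℂ) + t * Complex.I))) atTop (𝓝 0) := by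
    refine Tendsto.congr' ?_ hhor
    filter_upwards with T
    exact (key T).symm
  have heq : Complex.I • A₂ - Complex.I • A₁ = 0 := tendsto_nhds_unique hcomb hcomb0
  have : Complex.I * (A₂ - A₁) = 0 := by
    rw [mul_sub]
    simpa [smul_eq_mul] using heq
  have := mul_eq_zero.mp this
  rcases this with h | h
  · exact absurd h Complex.I_ne_zero
  · linear_combination -h

lemma Wfun_eq (k : ℕ) (y : ℝ) :
    Wfun k y = (1 / (2 * Real.pi)) * ∫ t : ℝ, Ffun k y (((2 : ℝ) : ℂ) + t * Complex.I) := by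
  unfold Wfun
  congr 1
  refine congrArg _ (funext fun t => ?_)
  unfold Ffun
  have h1 : ((2 : ℝ) : ℂ) + t * Complex.I = 2 + t * Complex.I := by norm_num
  have h2 : (1 : ℂ) / 2 + (2 + t * Complex.I) = 5 / 2 + t * Complex.I := by ring
  rw [h1, h2]

lemma Wfun_bound (k : ℕ) (hk : 4 ≤ k) {σ : ℝ} (hσ : 2 ≤ σ) :
    ∃ C : ℝ, 0 ≤ C ∧ ∀ y : ℝ, 1 ≤ y → ‖Wfun k y‖ ≤ C * y ^ (-σ) := by
  have hσ0 : (0:ℝ) < σ := by linarith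
  have hc0 : 0 < ‖gammaW k (1 / 2)‖ := norm_pos_iff.mpr (gammaW_half_ne k hk)
  have hMC : 0 < MC (σ + k / 2) := MC_pos _ (by positivity)
  set D := (2 * Real.pi) ^ (-(1 / 2 + σ)) * MC (σ + k / 2) / ‖gammaW k (1 / 2)‖ / σ with hD
  have hDpos : 0 < D := by
    rw [hD]; positivity
  refine ⟨1 / (2 * Real.pi) * (D * Real.pi), by positivity, fun y hy => ?_⟩
  have hy0 : 0 < y := lt_of_lt_of_le one_pos hy
  rw [Wfun_eq, Ffun_shift k hk hy two_pos hσ]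
  rw [norm_mul]
  have hsc : ‖(1 / (2 * Real.pi) : ℂ)‖ = 1 / (2 * Real.pi) := by
    have : (1 / (2 * Real.pi) : ℂ) = ((1 / (2 * Real.pi) : ℝ) : ℂ) := by push_cast; ring
    rw [this, Complex.norm_real, Real.norm_eq_abs,
      abs_of_pos (by positivity)]
  rw [hsc]
  have hbound : ‖∫ t : ℝ, Ffun k y ((σ : ℂ) + t * Complex.I)‖ ≤ (D * y ^ (-σ)) * Real.pi := by
    refine (norm_integral_le_integral_norm _).trans ?_
    have hint : ∫ t : ℝ, (D * y ^ (-σ)) * (1 + t ^ 2)⁻¹ = (D * y ^ (-σ)) * Real.pi := by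
      rw [MeasureTheory.integral_const_mul, integral_univ_inv_one_add_sq]
    rw [← hint]
    refine integral_mono_of_nonneg (Eventually.of_forall fun t => norm_nonneg _)
      (integrable_inv_one_add_sq.const_mul _) (Eventually.of_forall fun t => ?_)
    have := norm_Ffun_le_vertical k hk hy0 hσ0 t
    refine this.trans (le_of_eq ?_)
    rw [hD]; ring
  calc 1 / (2 * Real.pi) * ‖∫ t : ℝ, Ffun k y ((σ : ℂ) + t * Complex.I)‖
      ≤ 1 / (2 * Real.pi) * ((D * y ^ (-σ)) * Real.pi) := by
        gcongr
  _ = 1 / (2 * Real.pi) * (D * Real.pi) * y ^ (-σ) := by ring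

lemma re_mk (a b : ℝ) : ((a : ℂ) + (b : ℂ) * Complex.I).re = a := by simp

lemma im_mk (a b : ℝ) : ((a : ℂ) + (b : ℂ) * Complex.I).im = b := by simp

lemma gammaBox_half_ne (k : ℕ) (hk : 4 ≤ k) : gammaBox k (1 / 2) ≠ 0 := by
  have hk' : (4:ℝ) ≤ (k:ℝ) := by exact_mod_cast hk
  unfold gammaBox
  have e1 : ((1 : ℂ) / 2 + 1) / 2 = ((3 / 4 : ℝ) : ℂ) := by push_cast; ring
  have e2 : ((1 : ℂ) / 2 + (k : ℂ) - 1) / 2 = ((((k:ℝ) - 1 / 2) / 2 : ℝ) : ℂ) := by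
    push_cast; ring
  have e3 : ((1 : ℂ) / 2 + (k : ℂ)) / 2 = ((((k:ℝ) + 1 / 2) / 2 : ℝ) : ℂ) := by
    push_cast; ring
  rw [e1, e2, e3, Complex.Gamma_ofReal, Complex.Gamma_ofReal, Complex.Gamma_ofReal]
  refine mul_ne_zero (mul_ne_zero (mul_ne_zero ?_ ?_) ?_) ?_
  · rw [Ne, Complex.cpow_eq_zero_iff]
    rintro ⟨h, -⟩
    exact Real.pi_ne_zero (by exact_mod_cast h)
  · exact_mod_cast (Real.Gamma_pos_of_pos (by norm_num)).ne'
  · exact_mod_cast (Real.Gamma_pos_of_pos (by linarith)).ne'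
  · exact_mod_cast (Real.Gamma_pos_of_pos (by linarith)).ne'

lemma Vfun_bound (k : ℕ) (hk : 4 ≤ k) :
    ∃ C : ℝ, 0 ≤ C ∧ ∀ q : ℕ, 1 ≤ q → ∀ y : ℝ, 0 < y →
      ‖Vfun k q y‖ ≤ C * y ^ (-(2:ℝ)) := by
  have hk' : (4:ℝ) ≤ (k:ℝ) := by exact_mod_cast hk
  have hc1 : 0 < ‖gammaBox k (1 / 2)‖ := norm_pos_iff.mpr (gammaBox_half_ne k hk)
  set Z : ℝ := ∑' n : ℕ, ((n : ℝ) + 1) ^ (-(2:ℝ)) with hZ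
  have hZ0 : 0 ≤ Z := tsum_nonneg fun n => Real.rpow_nonneg (by positivity) _
  set G2 : ℝ := Real.Gamma (((k:ℝ) + 3 / 2) / 2) with hG2
  set G3 : ℝ := Real.Gamma (((k:ℝ) + 5 / 2) / 2) with hG3
  have hG2p : 0 < G2 := Real.Gamma_pos_of_pos (by linarith)
  have hG3p : 0 < G3 := Real.Gamma_pos_of_pos (by linarith)
  have hMC : 0 < MC (7 / 4) := MC_pos _ (by norm_num)
  set CV : ℝ := 4 * MC (7 / 4) * G2 * G3 / ‖gammaBox k (1 / 2)‖ * Z with hCV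
  have hCV0 : 0 ≤ CV := by positivity
  refine ⟨1 / (2 * Real.pi) * (CV * Real.pi), by positivity, fun q hq y hy => ?_⟩
  have hq' : (1:ℝ) ≤ (q:ℝ) := by exact_mod_cast hq
  have hq0 : (0:ℝ) < (q:ℝ) := by linarith
  unfold Vfun
  rw [norm_mul]
  have hsc : ‖(1 / (2 * Real.pi) : ℂ)‖ = 1 / (2 * Real.pi) := by
    have : (1 / (2 * Real.pi) : ℂ) = ((1 / (2 * Real.pi) : ℝ) : ℂ) := by push_cast; ring
    rw [this, Complex.norm_real, Real.norm_eq_abs, abs_of_pos (by positivity)]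
  rw [hsc]
  have hbound : ‖∫ t : ℝ,
      (gammaBox k (5 / 2 + t * Complex.I) / gammaBox k (1 / 2)) *
        (1 - (q : ℂ) ^ (-(5 + 2 * t * Complex.I))) *
        riemannZeta (5 + 2 * t * Complex.I) *
        (y : ℂ) ^ (-(2 + t * Complex.I)) / (2 + t * Complex.I)‖ ≤
      (CV * y ^ (-(2:ℝ))) * Real.pi := by
    refine (norm_integral_le_integral_norm _).trans ?_
    have hint : ∫ t : ℝ, (CV * y ^ (-(2:ℝ))) * (1 + t ^ 2)⁻¹
        = (CV * y ^ (-(2:ℝ))) * Real.pi := by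
      rw [MeasureTheory.integral_const_mul, integral_univ_inv_one_add_sq]
    rw [← hint]
    refine integral_mono_of_nonneg (Eventually.of_forall fun t => norm_nonneg _)
      (integrable_inv_one_add_sq.const_mul _) (Eventually.of_forall fun t => ?_)
    simp only
    -- gammaBox factor
    have hgb : ‖gammaBox k (5 / 2 + t * Complex.I)‖ ≤
        4 * MC (7 / 4) * G2 * G3 * (1 + t ^ 2)⁻¹ := by
      unfold gammaBox
      rw [norm_mul, norm_mul, norm_mul]
      have a0 : -3 * ((5:ℂ) / 2 + t * Complex.I) / 2
          = ((-15 / 4 : ℝ) : ℂ) + ((-3 * t / 2 : ℝ) : ℂ) * Complex.I := by push_cast; ring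
      have h0 : ‖(Real.pi : ℂ) ^ (-3 * ((5:ℂ) / 2 + t * Complex.I) / 2)‖ ≤ 1 := by
        rw [a0, Complex.norm_cpow_eq_rpow_re_of_pos Real.pi_pos, re_mk]
        exact Real.rpow_le_one_of_one_le_of_nonpos (by linarith [Real.pi_gt_three]) (by norm_num)
      have a1 : (((5:ℂ) / 2 + t * Complex.I) + 1) / 2
          = ((7 / 4 : ℝ) : ℂ) + ((t / 2 : ℝ) : ℂ) * Complex.I := by push_cast; ring
      have h1 : ‖Complex.Gamma ((((5:ℂ) / 2 + t * Complex.I) + 1) / 2)‖ ≤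
          4 * MC (7 / 4) * (1 + t ^ 2)⁻¹ := by
        rw [a1]
        refine (norm_Gamma_div _ (by rw [re_mk]; norm_num)).trans ?_
        rw [re_mk, im_mk, ← div_eq_mul_inv,
          div_le_div_iff₀ (by positivity) (by positivity)]
        nlinarith [hMC.le, sq_nonneg t]
      have a2 : (((5:ℂ) / 2 + t * Complex.I) + (k:ℂ) - 1) / 2
          = (((((k:ℝ) + 3 / 2) / 2) : ℝ) : ℂ) + ((t / 2 : ℝ) : ℂ) * Complex.I := by
        push_cast; ring
      have h2 : ‖Complex.Gamma ((((5:ℂ) / 2 + t * Complex.I) + (k:ℂ) - 1) / 2)‖ ≤ G2 := by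
        rw [a2]
        refine (norm_Gamma_le (by rw [re_mk]; positivity)).trans (le_of_eq ?_)
        rw [re_mk, hG2]
      have a3 : (((5:ℂ) / 2 + t * Complex.I) + (k:ℂ)) / 2
          = (((((k:ℝ) + 5 / 2) / 2) : ℝ) : ℂ) + ((t / 2 : ℝ) : ℂ) * Complex.I := by
        push_cast; ring
      have h3 : ‖Complex.Gamma ((((5:ℂ) / 2 + t * Complex.I) + (k:ℂ)) / 2)‖ ≤ G3 := by
        rw [a3]
        refine (norm_Gamma_le (by rw [re_mk]; positivity)).trans (le_of_eq ?_)
        rw [re_mk, hG3]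
      calc ‖(Real.pi : ℂ) ^ (-3 * ((5:ℂ) / 2 + t * Complex.I) / 2)‖ *
            ‖Complex.Gamma ((((5:ℂ) / 2 + t * Complex.I) + 1) / 2)‖ *
            ‖Complex.Gamma ((((5:ℂ) / 2 + t * Complex.I) + (k:ℂ) - 1) / 2)‖ *
            ‖Complex.Gamma ((((5:ℂ) / 2 + t * Complex.I) + (k:ℂ)) / 2)‖
          ≤ 1 * (4 * MC (7 / 4) * (1 + t ^ 2)⁻¹) * G2 * G3 := by
            gcongr <;> first | exact h0 | exact h1 | exact h2 | exact h3 | positivity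
      _ = 4 * MC (7 / 4) * G2 * G3 * (1 + t ^ 2)⁻¹ := by ring
    -- q factor
    have hqf : ‖1 - (q : ℂ) ^ (-(5 + 2 * (t:ℂ) * Complex.I))‖ ≤ 2 := by
      refine (norm_sub_le _ _).trans ?_
      rw [norm_one, ← Complex.ofReal_natCast, norm_ofReal_cpow hq0]
      have : (-(5 + 2 * (t:ℂ) * Complex.I)).re = -5 := by
        have e : -(5 + 2 * (t:ℂ) * Complex.I)
            = ((-5 : ℝ) : ℂ) + ((-2 * t : ℝ) : ℂ) * Complex.I := by push_cast; ring
        rw [e, re_mk]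
      rw [this]
      have : (q:ℝ) ^ (-5 : ℝ) ≤ 1 :=
        Real.rpow_le_one_of_one_le_of_nonpos hq' (by norm_num)
      linarith
    -- zeta factor
    have hzf : ‖riemannZeta (5 + 2 * (t:ℂ) * Complex.I)‖ ≤ Z := by
      have e : (5 : ℂ) + 2 * (t:ℂ) * Complex.I
          = ((5 : ℝ) : ℂ) + ((2 * t : ℝ) : ℂ) * Complex.I := by push_cast; ring
      refine (norm_zeta_le ?_).trans (le_of_eq hZ.symm)
      rw [e, re_mk]; norm_num
    -- y factor
    have hyf : ‖(y : ℂ) ^ (-(2 + (t:ℂ) * Complex.I))‖ = y ^ (-(2:ℝ)) := by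
      rw [norm_ofReal_cpow hy]
      congr 1
      have e : -(2 + (t:ℂ) * Complex.I)
          = ((-2 : ℝ) : ℂ) + ((-t : ℝ) : ℂ) * Complex.I := by push_cast; ring
      rw [e, re_mk]
    -- denominator
    have hden : (2:ℝ) ≤ ‖(2 : ℂ) + (t:ℂ) * Complex.I‖ := by
      calc (2:ℝ) = |((2 : ℂ) + (t:ℂ) * Complex.I).re| := by simp
      _ ≤ ‖_‖ := Complex.abs_re_le_norm _
    rw [norm_div, norm_mul, norm_mul, norm_mul, norm_div]
    calc ‖gammaBox k (5 / 2 + (t:ℂ) * Complex.I)‖ / ‖gammaBox k (1 / 2)‖ *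
          ‖1 - (q : ℂ) ^ (-(5 + 2 * (t:ℂ) * Complex.I))‖ *
          ‖riemannZeta (5 + 2 * (t:ℂ) * Complex.I)‖ *
          ‖(y : ℂ) ^ (-(2 + (t:ℂ) * Complex.I))‖ / ‖(2 : ℂ) + (t:ℂ) * Complex.I‖
        ≤ (4 * MC (7 / 4) * G2 * G3 * (1 + t ^ 2)⁻¹) / ‖gammaBox k (1 / 2)‖ *
          2 * Z * y ^ (-(2:ℝ)) / 2 := by
          rw [hyf]
          gcongr <;>
            first | exact hgb | exact hqf | exact hzf | exact hden | exact hc1 | positivity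
    _ = CV * y ^ (-(2:ℝ)) * (1 + t ^ 2)⁻¹ := by rw [hCV]; ring
  calc 1 / (2 * Real.pi) * ‖∫ t : ℝ,
        (gammaBox k (5 / 2 + t * Complex.I) / gammaBox k (1 / 2)) *
          (1 - (q : ℂ) ^ (-(5 + 2 * t * Complex.I))) *
          riemannZeta (5 + 2 * t * Complex.I) *
          (y : ℂ) ^ (-(2 + t * Complex.I)) / (2 + t * Complex.I)‖
      ≤ 1 / (2 * Real.pi) * ((CV * y ^ (-(2:ℝ))) * Real.pi) := by gcongr
  _ = 1 / (2 * Real.pi) * (CV * Real.pi) * y ^ (-(2:ℝ)) := by ring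

/-- For every prime `q`,
`∑_{n≥1} n^{−3/2} |V(n/q)| |W(√q n²)| ≪_{k,A} q^{−A}`. -/
theorem statement10 (k : ℕ) (hk : Even k) (hk4 : 4 ≤ k) (A : ℝ) (hA : 0 < A) :
    ∃ C : ℝ, ∀ q : ℕ, q.Prime →
      (∑' n : ℕ+, (n : ℝ) ^ (-(3 : ℝ) / 2) * ‖Vfun k q ((n : ℝ) / q)‖ *
          ‖Wfun k (Real.sqrt q * (n : ℝ) ^ 2)‖)
        ≤ C * (q : ℝ) ^ (-A) := by
  set σ : ℝ := 2 * A + 4 with hσdef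
  have hσ2 : 2 ≤ σ := by rw [hσdef]; linarith
  obtain ⟨CW, hCW0, hCW⟩ := Wfun_bound k hk4 hσ2
  obtain ⟨CV, hCV0, hCV⟩ := Vfun_bound k hk4
  have hSsum : Summable (fun n : ℕ+ => (n : ℝ) ^ (-(2:ℝ))) := by
    have h : Summable (fun n : ℕ => (n : ℝ) ^ (-(2:ℝ))) :=
      Real.summable_nat_rpow.mpr (by norm_num)
    exact h.comp_injective PNat.coe_injective
  set S : ℝ := ∑' n : ℕ+, (n : ℝ) ^ (-(2:ℝ)) with hS
  have hS0 : 0 ≤ S := tsum_nonneg fun n => Real.rpow_nonneg (by positivity) _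
  refine ⟨CV * CW * S, fun q hq => ?_⟩
  have hq1 : 1 ≤ q := hq.one_lt.le
  have hq1' : (1:ℝ) ≤ (q:ℝ) := by exact_mod_cast hq1
  have hq0 : (0:ℝ) < (q:ℝ) := by linarith
  have hterm : ∀ n : ℕ+,
      (n : ℝ) ^ (-(3 : ℝ) / 2) * ‖Vfun k q ((n : ℝ) / q)‖ *
        ‖Wfun k (Real.sqrt q * (n : ℝ) ^ 2)‖ ≤
      (CV * CW * (q:ℝ) ^ (-A)) * (n : ℝ) ^ (-(2:ℝ)) := by
    intro n
    have hn0 : (0:ℝ) < (n : ℝ) := by exact_mod_cast n.pos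
    have hn1 : (1:ℝ) ≤ (n : ℝ) := by exact_mod_cast n.one_le
    have hy1 : (1:ℝ) ≤ Real.sqrt q * (n : ℝ) ^ 2 := by
      have h1 : (1:ℝ) ≤ Real.sqrt q := by
        rw [show (1:ℝ) = Real.sqrt 1 by rw [Real.sqrt_one]]
        exact Real.sqrt_le_sqrt hq1'
      nlinarith
    have hV := hCV q hq1 ((n : ℝ) / q) (by positivity)
    have hW := hCW (Real.sqrt q * (n : ℝ) ^ 2) hy1
    have e1 : ((n : ℝ) / q) ^ (-(2:ℝ)) = (n : ℝ) ^ (-(2:ℝ)) * (q:ℝ) ^ (2:ℝ) := by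
      rw [Real.div_rpow hn0.le hq0.le, Real.rpow_neg hq0.le]
      field_simp
    have e2 : (Real.sqrt q * (n : ℝ) ^ 2) ^ (-σ)
        = (q:ℝ) ^ ((1/2) * (-σ)) * (n : ℝ) ^ ((2:ℝ) * (-σ)) := by
      rw [Real.mul_rpow (Real.sqrt_nonneg _) (by positivity), Real.sqrt_eq_rpow,
        ← Real.rpow_natCast (n : ℝ) 2, ← Real.rpow_mul hq0.le, ← Real.rpow_mul hn0.le]
      norm_num
    have eq1 : (2:ℝ) + (1/2) * (-σ) = -A := by rw [hσdef]; ring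
    have eq2 : -(3:ℝ)/2 + (-(2:ℝ)) + (2:ℝ) * (-σ) ≤ -(2:ℝ) := by rw [hσdef]; linarith
    calc (n : ℝ) ^ (-(3 : ℝ) / 2) * ‖Vfun k q ((n : ℝ) / q)‖ *
          ‖Wfun k (Real.sqrt q * (n : ℝ) ^ 2)‖
        ≤ (n : ℝ) ^ (-(3 : ℝ) / 2) * (CV * ((n : ℝ) / q) ^ (-(2:ℝ))) *
            (CW * (Real.sqrt q * (n : ℝ) ^ 2) ^ (-σ)) := by
          gcongr <;> first | exact hV | exact hW | exact hCV0 | exact hCW0 | positivity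
    _ = (CV * CW) * ((q:ℝ) ^ (2:ℝ) * (q:ℝ) ^ ((1/2) * (-σ))) *
          ((n : ℝ) ^ (-(3:ℝ)/2) * (n : ℝ) ^ (-(2:ℝ)) * (n : ℝ) ^ ((2:ℝ) * (-σ))) := by
          rw [e1, e2]; ring
    _ = (CV * CW) * (q:ℝ) ^ (-A) *
          (n : ℝ) ^ (-(3:ℝ)/2 + (-(2:ℝ)) + (2:ℝ) * (-σ)) := by
          rw [← Real.rpow_add hq0, ← Real.rpow_add hn0, ← Real.rpow_add hn0, eq1]
    _ ≤ (CV * CW) * (q:ℝ) ^ (-A) * (n : ℝ) ^ (-(2:ℝ)) := by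
          have := Real.rpow_le_rpow_of_exponent_le hn1 eq2
          have hc : 0 ≤ (CV * CW) * (q:ℝ) ^ (-A) :=
            mul_nonneg (mul_nonneg hCV0 hCW0) (Real.rpow_nonneg hq0.le _)
          exact mul_le_mul_of_nonneg_left this hc
    _ = (CV * CW * (q:ℝ) ^ (-A)) * (n : ℝ) ^ (-(2:ℝ)) := by ring
  have hbsum : Summable (fun n : ℕ+ => (CV * CW * (q:ℝ) ^ (-A)) * (n : ℝ) ^ (-(2:ℝ))) :=
    hSsum.mul_left _
  have hlsum : Summable (fun n : ℕ+ =>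
      (n : ℝ) ^ (-(3 : ℝ) / 2) * ‖Vfun k q ((n : ℝ) / q)‖ *
        ‖Wfun k (Real.sqrt q * (n : ℝ) ^ 2)‖) := by
    refine Summable.of_nonneg_of_le (fun n => by positivity) hterm hbsum
  calc (∑' n : ℕ+, (n : ℝ) ^ (-(3 : ℝ) / 2) * ‖Vfun k q ((n : ℝ) / q)‖ *
        ‖Wfun k (Real.sqrt q * (n : ℝ) ^ 2)‖)
      ≤ ∑' n : ℕ+, (CV * CW * (q:ℝ) ^ (-A)) * (n : ℝ) ^ (-(2:ℝ)) :=
        Summable.tsum_le_tsum hterm hlsum hbsum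
  _ = (CV * CW * (q:ℝ) ^ (-A)) * S := by rw [tsum_mul_left]
  _ = CV * CW * S * (q:ℝ) ^ (-A) := by ring
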